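/- Assume in addition the weak inf-sup condition: there exist constants C₀, C₁, C₂ > 0 such that for every z ∈ W there exists r₀ ∈ V with ‖r₀‖_V ≤ C₂·N(z) and b(z, r₀) ≥ C₀·N(z)² − C₁·q_c(z)^{1/2}·N(z). Then there exists a constant K > 0, depending only on C₀, C₁, C₂, with the following property: if δ ≥ 0, ℓ : V → ℝ is a linear functional with |ℓ(r)| ≤ δ·‖r‖_V for all r ∈ V, and (p,z) ∈ V × W satisfies B((p,z),(r,v)) = ℓ(r) for all (r,v) ∈ V × W, then |(p,z)|_X ≤ K·δ. (This is the abstract mechanism giving the optimal-order L²-error estimates ‖u − u_h‖ ≤ C h^s(‖q‖_{H^s} + ‖u‖_{H^s}) for the HDG method without an Aubin–Nitsche duality argument: the triple of errors (Π_V q − q_h, Π_W u − u_h, P_M ū − ū_h) satisfies the error equations with ℓ(r) = −(σ^{-1}(q − Π_V q), r) and δ = ‖q − Π_V q‖_{V_h}.) -/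
import Mathlib


/-- abstract error estimate without a duality argument.
Under the abstract HDG axioms and the weak inf-sup condition with constants
`C₀, C₁, C₂ > 0`, there is `K > 0` (depending only on `C₀, C₁, C₂`) such that
any `(p, z)` solving `B((p,z),(r,v)) = ℓ(r)` for all `(r,v)`, with
`|ℓ(r)| ≤ δ ‖r‖`, satisfies `|(p,z)|_X ≤ K δ`. -/
theorem hdg_error_estimate_without_duality
    (V W : Type*) [NormedAddCommGroup V] [InnerProductSpace ℝ V]
    [AddCommGroup W] [Module ℝ W] (N : Seminorm ℝ W)
    (a : V →ₗ[ℝ] V →ₗ[ℝ] ℝ) (b : W →ₗ[ℝ] V →ₗ[ℝ] ℝ) (c : W →ₗ[ℝ] W →ₗ[ℝ] ℝ)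
    (SV : V →ₗ[ℝ] V) (SW : W →ₗ[ℝ] W)
    (ha1 : ∀ p : V, a p (SV p) = ‖p‖ ^ 2)
    (ha2 : ∀ r : V, ‖SV r‖ ≤ ‖r‖)
    (ha3 : ∀ p r : V, |a p r| ≤ ‖p‖ * ‖r‖)
    (hc0 : ∀ z : W, 0 ≤ c z (SW z))
    (hc1 : ∀ z : W, c (SW z) (SW (SW z)) ≤ c z (SW z))
    (hcN : ∀ z : W, N (SW z) ≤ N z)
    (hb : ∀ (z : W) (r : V), b z (SV r) = b (SW z) r)
    -- the weak inf-sup condition with constants C₀, C₁, C₂ > 0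
    (C₀ C₁ C₂ : ℝ) (hC₀ : 0 < C₀) (hC₁ : 0 < C₁) (hC₂ : 0 < C₂)
    (hweak : ∀ z : W, ∃ r₀ : V, ‖r₀‖ ≤ C₂ * N z ∧
      C₀ * (N z) ^ 2 - C₁ * Real.sqrt (c z (SW z)) * N z ≤ b z r₀) :
    ∃ K > (0 : ℝ),
      ∀ (δ : ℝ), 0 ≤ δ → ∀ ℓ : V →ₗ[ℝ] ℝ, (∀ r : V, |ℓ r| ≤ δ * ‖r‖) →
        ∀ (p : V) (z : W),
          (∀ (r : V) (v : W), a p r + b z r + b v p - c z v = ℓ r) →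
          Real.sqrt (‖p‖ ^ 2 + (N z) ^ 2 + c z (SW z)) ≤ K * δ := by
  set M : ℝ := (C₁ + 2 * C₂) / C₀ with hM
  have hMpos : 0 < M := div_pos (by linarith) hC₀
  refine ⟨Real.sqrt (M ^ 2 + 2), Real.sqrt_pos.mpr (by nlinarith), ?_⟩
  intro δ hδ ℓ hℓ p z heq
  set q : ℝ := c z (SW z) with hqdef
  have hq0 : 0 ≤ q := hc0 z
  -- energy identity
  have henergy : ‖p‖ ^ 2 + q = ℓ (SV p) := by
    have h := heq (SV p) (-(SW z))
    have h1 : b (-(SW z)) p = -(b (SW z) p) := by simp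
    have h2 : c z (-(SW z)) = -(c z (SW z)) := by simp
    rw [ha1 p, hb z p, h1, h2] at h
    linarith
  have hp : ‖p‖ ≤ δ := by
    rcases eq_or_lt_of_le (norm_nonneg p) with h0 | h0
    · linarith [h0]
    · have := (hℓ (SV p)).trans (mul_le_mul_of_nonneg_left (ha2 p) hδ)
      have habs : ℓ (SV p) ≤ δ * ‖p‖ := (le_abs_self _).trans this
      nlinarith
  have hqδ : q ≤ δ ^ 2 := by
    have := (hℓ (SV p)).trans (mul_le_mul_of_nonneg_left (ha2 p) hδ)
    have habs : ℓ (SV p) ≤ δ * ‖p‖ := (le_abs_self _).trans this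
    nlinarith [sq_nonneg ‖p‖]
  have hsq : Real.sqrt q ≤ δ := by
    calc Real.sqrt q ≤ Real.sqrt (δ ^ 2) := Real.sqrt_le_sqrt hqδ
    _ = δ := by rw [Real.sqrt_sq hδ]
  -- bound on N z
  obtain ⟨r₀, hr₀norm, hr₀b⟩ := hweak z
  have hNz0 : 0 ≤ N z := apply_nonneg N z
  have heq0 : a p r₀ + b z r₀ = ℓ r₀ := by
    have h := heq r₀ 0
    simp at h
    linarith
  have hbz : b z r₀ ≤ 2 * C₂ * δ * N z := by
    have h1 : ℓ r₀ ≤ δ * ‖r₀‖ := (le_abs_self _).trans (hℓ r₀)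
    have h2 : -(‖p‖ * ‖r₀‖) ≤ a p r₀ := neg_le_of_abs_le (ha3 p r₀)
    have h3 : ‖p‖ * ‖r₀‖ ≤ δ * (C₂ * N z) :=
      mul_le_mul hp hr₀norm (norm_nonneg _) hδ
    have h4 : δ * ‖r₀‖ ≤ δ * (C₂ * N z) :=
      mul_le_mul_of_nonneg_left hr₀norm hδ
    nlinarith
  have hNz : N z ≤ M * δ := by
    have hkey : C₀ * (N z) ^ 2 ≤ (C₁ + 2 * C₂) * δ * N z := by
      have h5 : C₁ * Real.sqrt q * N z ≤ C₁ * δ * N z := by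
        have := mul_le_mul_of_nonneg_left hsq hC₁.le
        exact mul_le_mul_of_nonneg_right this hNz0
      nlinarith
    rcases eq_or_lt_of_le hNz0 with h0 | h0
    · rw [← h0]; positivity
    · rw [hM, div_mul_eq_mul_div, le_div_iff₀ hC₀]
      nlinarith
  -- conclude
  have hsum : ‖p‖ ^ 2 + (N z) ^ 2 + q ≤ (M ^ 2 + 2) * δ ^ 2 := by
    have h1 : ‖p‖ ^ 2 ≤ δ ^ 2 := by nlinarith [norm_nonneg p]
    have h2 : (N z) ^ 2 ≤ M ^ 2 * δ ^ 2 := by nlinarith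
    nlinarith
  calc Real.sqrt (‖p‖ ^ 2 + (N z) ^ 2 + q)
      ≤ Real.sqrt ((M ^ 2 + 2) * δ ^ 2) := Real.sqrt_le_sqrt hsum
    _ = Real.sqrt (M ^ 2 + 2) * δ := by
        rw [Real.sqrt_mul (by positivity), Real.sqrt_sq hδ]
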